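/- Let L : ℕ → ℝ satisfy L(n+2) = 2·(L(n+1) + L(n)) for all n, with L(0) < 0 and L(1) < 0. Then L(n) → −∞ as n → ∞, and L(n+1)/L(n) → 1 + √3 as n → ∞. -/

import Mathlib

open Filter Topology

/-- The order of convergence of Inverse Cubic Iteration is 1 + √3: the
log-error recurrence with negative initial data diverges to −∞ and
successive ratios tend to 1 + √3. -/
theorem ICI_log_recurrence_order (L : ℕ → ℝ)
    (hrec : ∀ n, L (n + 2) = 2 * (L (n + 1) + L n))
    (h0 : L 0 < 0) (h1 : L 1 < 0) :
    Tendsto L atTop atBot ∧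
    Tendsto (fun n => L (n + 1) / L n) atTop (𝓝 (1 + Real.sqrt 3)) := by
  set s := Real.sqrt 3 with hs
  have hs0 : 0 ≤ s := Real.sqrt_nonneg 3
  have hs2 : s ^ 2 = 3 := Real.sq_sqrt (by norm_num)
  have hs1 : 1 < s := by nlinarith
  set α : ℝ := 1 + s with hα
  set β : ℝ := 1 - s with hβ
  have hαpos : 0 < α := by simp [hα]; linarith
  have hα1 : 1 < α := by simp [hα]; linarith
  have hαne : α ≠ 0 := ne_of_gt hαpos
  have hα2 : α ^ 2 = 2 * α + 2 := by simp only [hα]; linear_combination hs2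
  have hβ2 : β ^ 2 = 2 * β + 2 := by simp only [hβ]; linear_combination hs2
  set A : ℝ := (L 1 - β * L 0) / (2 * s) with hA
  set B : ℝ := (α * L 0 - L 1) / (2 * s) with hB
  have hsne : (2 : ℝ) * s ≠ 0 := by positivity
  have key : ∀ n, L n = A * α ^ n + B * β ^ n := by
    intro n
    induction n using Nat.strong_induction_on with
    | _ n ih =>
      match n with
      | 0 =>
        simp only [pow_zero, mul_one, hA, hB]
        rw [← add_div, eq_div_iff hsne]
        simp only [hα, hβ]
        ring
      | 1 =>
        simp only [pow_one, hA, hB]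
        rw [div_mul_eq_mul_div, div_mul_eq_mul_div, ← add_div, eq_div_iff hsne]
        simp only [hα, hβ]
        ring
      | (m+2) =>
        rw [hrec m, ih (m+1) (by omega), ih m (by omega)]
        linear_combination (-(A * α ^ m)) * hα2 + (-(B * β ^ m)) * hβ2
  have hAneg : A < 0 := by
    apply div_neg_of_neg_of_pos _ (by positivity)
    simp only [hβ]
    nlinarith
  have hAne : A ≠ 0 := ne_of_lt hAneg
  set r : ℝ := β / α with hr
  have habs : |r| < 1 := by
    rw [hr, abs_div, abs_of_pos hαpos, div_lt_one hαpos]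
    rw [abs_lt]
    constructor <;> simp [hβ, hα] <;> linarith
  have hrtend : Tendsto (fun n => r ^ n) atTop (𝓝 0) :=
    tendsto_pow_atTop_nhds_zero_of_abs_lt_one habs
  have hrn : ∀ n : ℕ, r ^ n = β ^ n / α ^ n := fun n => div_pow β α n
  have hgform : ∀ n, L n = α ^ n * (A + B * r ^ n) := by
    intro n
    rw [key n, hrn]
    field_simp
  have hgtend : Tendsto (fun n => A + B * r ^ n) atTop (𝓝 A) := by
    have := (hrtend.const_mul B).const_add A
    simpa using this
  have hftend : Tendsto (fun n => α * A + β * B * r ^ n) atTop (𝓝 (α * A)) := by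
    have := (hrtend.const_mul (β * B)).const_add (α * A)
    simpa using this
  constructor
  · have hpow : Tendsto (fun n : ℕ => α ^ n) atTop atTop :=
      tendsto_pow_atTop_atTop_of_one_lt hα1
    have := hpow.atTop_mul_neg hAneg hgtend
    exact this.congr fun n => (hgform n).symm
  · have hdiv : Tendsto (fun n => (α * A + β * B * r ^ n) / (A + B * r ^ n)) atTop
        (𝓝 (α * A / A)) := hftend.div hgtend hAne
    have hval : α * A / A = α := by rw [mul_div_assoc, div_self hAne, mul_one]
    rw [← hval]
    apply hdiv.congr
    intro n
    have hfform : L (n + 1) = α ^ n * (α * A + β * B * r ^ n) := by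
      rw [key (n + 1), hrn]
      field_simp
      ring
    rw [hfform, hgform n, mul_div_mul_left _ _ (pow_ne_zero n hαne)]
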